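/- arXiv:1408.0262 — 2 statements merged into one kernel-verified Lean document; each statement's English description precedes it below -/
import Mathlib

section
/- Let α ∈ GF(2)^{m×m} be symmetric with rank(α) = k. Then there exist linearly independent vectors z₁,…,z_k ∈ GF(2)^m and nonnegative integers s, t with k = s + 2t such that α = Σ_{i=1}^{s} z_i⊗z_i + Σ_{j=1}^{t} (z_{s+2j}⊗z_{s+2j-1} + z_{s+2j-1}⊗z_{s+2j}). -/
open Matrix

namespace SymDecompAux

variable {m : ℕ}

private lemma addself_vec (v : Fin m → ZMod 2) : v + v = 0 := by
  ext i
  have h : ∀ a : ZMod 2, a + a = 0 := by decide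
  exact h (v i)

private lemma addself_mat (A : Matrix (Fin m) (Fin m) (ZMod 2)) : A + A = 0 := by
  ext i j
  have h : ∀ a : ZMod 2, a + a = 0 := by decide
  exact h (A i j)

private lemma vmv_mulVec (u v x : Fin m → ZMod 2) :
    (vecMulVec u v) *ᵥ x = (v ⬝ᵥ x) • u := by
  ext i
  simp [vecMulVec, mulVec, dotProduct, Finset.mul_sum, mul_comm, mul_assoc, mul_left_comm]

private lemma vmv_transpose (u v : Fin m → ZMod 2) :
    (vecMulVec u v)ᵀ = vecMulVec v u := by
  ext i j; simp [vecMulVec, mul_comm]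

private lemma rank_nullity (A : Matrix (Fin m) (Fin m) (ZMod 2)) :
    A.rank + Module.finrank (ZMod 2) (LinearMap.ker A.mulVecLin) = m := by
  rw [Matrix.rank, LinearMap.finrank_range_add_finrank_ker]
  simp

private lemma rank_vmv_le (u v : Fin m → ZMod 2) : (vecMulVec u v).rank ≤ 1 := by
  rw [Matrix.rank]
  have h : LinearMap.range (vecMulVec u v).mulVecLin ≤ Submodule.span (ZMod 2) {u} := by
    rintro _ ⟨x, rfl⟩
    rw [Matrix.mulVecLin_apply, vmv_mulVec]
    exact Submodule.smul_mem _ _ (Submodule.mem_span_singleton_self u)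
  refine le_trans (Submodule.finrank_mono h) ?_
  by_cases hu : u = 0
  · rw [hu, Submodule.span_zero_singleton, finrank_bot]
    omega
  · rw [finrank_span_singleton hu]

private lemma rank_add_le (A B : Matrix (Fin m) (Fin m) (ZMod 2)) :
    (A + B).rank ≤ A.rank + B.rank := by
  rw [Matrix.rank, Matrix.rank, Matrix.rank]
  have h : LinearMap.range (A + B).mulVecLin ≤
      LinearMap.range A.mulVecLin ⊔ LinearMap.range B.mulVecLin := by
    rintro _ ⟨x, rfl⟩
    rw [Matrix.mulVecLin_apply, Matrix.add_mulVec]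
    exact Submodule.add_mem_sup ⟨x, rfl⟩ ⟨x, rfl⟩
  refine le_trans (Submodule.finrank_mono h) ?_
  have := Submodule.finrank_sup_add_finrank_inf_eq
    (LinearMap.range A.mulVecLin) (LinearMap.range B.mulVecLin)
  omega

private lemma sum_mulVec (s : Finset ℕ) (f : ℕ → Matrix (Fin m) (Fin m) (ZMod 2))
    (x : Fin m → ZMod 2) : (∑ i ∈ s, f i) *ᵥ x = ∑ i ∈ s, (f i) *ᵥ x := by
  classical
  induction s using Finset.induction with
  | empty => simp [Matrix.zero_mulVec]
  | insert _ _ h ih => simp [Finset.sum_insert h, Matrix.add_mulVec, ih]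

private lemma aux (k : ℕ) : ∀ (α : Matrix (Fin m) (Fin m) (ZMod 2)),
    αᵀ = α → α.rank = k →
    ∃ (s t : ℕ) (z : ℕ → (Fin m → ZMod 2)),
      k = s + 2 * t ∧
      α = (∑ a ∈ Finset.range s, vecMulVec (z a) (z a)) +
          ∑ b ∈ Finset.range t,
            (vecMulVec (z (s + 2 * b + 1)) (z (s + 2 * b)) +
             vecMulVec (z (s + 2 * b)) (z (s + 2 * b + 1))) ∧
      ∀ i, i < k → z i ∈ LinearMap.range α.mulVecLin := by
  induction k using Nat.strong_induction_on with
  | _ k IH =>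
  intro α hsym hrank
  have hsym' : ∀ a b, α a b = α b a := fun a b =>
    ((congrFun (congrFun hsym a) b).symm).trans (Matrix.transpose_apply α a b)
  rcases Nat.eq_zero_or_pos k with hk0 | hkpos
  · -- rank zero: α = 0
    subst hk0
    have hα : α = 0 := by
      have h0 : LinearMap.range α.mulVecLin = ⊥ := Submodule.finrank_eq_zero.mp hrank
      have h1 : α.mulVecLin = 0 := LinearMap.range_eq_bot.mp h0
      ext i j
      have h2 : α *ᵥ Pi.single j 1 = 0 := congrFun (congrArg DFunLike.coe h1) (Pi.single j 1)
      have h3 := congrFun h2 i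
      rwa [Matrix.mulVec_single_one] at h3
    exact ⟨0, 0, fun _ => 0, by simp, by simp [hα], by omega⟩
  · -- α ≠ 0
    have hαne : α ≠ 0 := by
      intro h0
      rw [h0] at hrank
      have : (0 : Matrix (Fin m) (Fin m) (ZMod 2)).rank = 0 := by
        simp [Matrix.rank]
      omega
    have hex : ∃ i j, α i j ≠ 0 := by
      by_contra h
      push_neg at h
      exact hαne (by ext i j; simpa using h i j)
    have hone : ∀ a : ZMod 2, a ≠ 0 → a = 1 := by decide
    by_cases hd : ∃ i, α i i ≠ 0
    · -- Case A: nonzero diagonal entry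
      obtain ⟨i, hi⟩ := hd
      have hii : α i i = 1 := hone _ hi
      set u : Fin m → ZMod 2 := α *ᵥ Pi.single i 1 with hu
      have hucol : ∀ r, u r = α r i := by
        intro r; rw [hu, Matrix.mulVec_single_one]; rfl
      have hudot : ∀ x, u ⬝ᵥ x = (α *ᵥ x) i := by
        intro x
        simp only [dotProduct, mulVec, dotProduct]
        exact Finset.sum_congr rfl fun r _ => by rw [hucol r, hsym' r i]
      set α' := α + vecMulVec u u with hα'
      have hsymα' : α'ᵀ = α' := by
        rw [hα', Matrix.transpose_add, hsym, vmv_transpose]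
      have hrecover : α = α' + vecMulVec u u := by
        rw [hα', add_assoc, addself_mat, add_zero]
      have hα'mulVec : ∀ x, α' *ᵥ x = α *ᵥ x + (u ⬝ᵥ x) • u := by
        intro x
        rw [hα', Matrix.add_mulVec, vmv_mulVec]
      have hui : u i = 1 := by rw [hucol]; exact hii
      have hune : u ≠ 0 := fun h => by
        have := congrFun h i; rw [hui] at this; exact one_ne_zero this
      have hsub : LinearMap.ker α.mulVecLin ≤ LinearMap.ker α'.mulVecLin := by
        intro x hx
        have hx0 : α *ᵥ x = 0 := LinearMap.mem_ker.mp hx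
        refine LinearMap.mem_ker.mpr ?_
        show α' *ᵥ x = 0
        rw [hα'mulVec, hx0, hudot, hx0]
        simp
      have heki : Pi.single i (1 : ZMod 2) ∈ LinearMap.ker α'.mulVecLin := by
        refine LinearMap.mem_ker.mpr ?_
        show α' *ᵥ Pi.single i 1 = 0
        rw [hα'mulVec, ← hu]
        have hd1 : u ⬝ᵥ Pi.single i (1 : ZMod 2) = u i := by
          simp [dotProduct_single]
        rw [hd1, hui, one_smul, addself_vec]
      have hkerlt : LinearMap.ker α.mulVecLin < LinearMap.ker α'.mulVecLin := by
        refine lt_of_le_of_ne hsub (fun heq => ?_)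
        rw [← heq] at heki
        have h0 : α *ᵥ Pi.single i 1 = 0 := LinearMap.mem_ker.mp heki
        rw [← hu] at h0
        exact hune h0
      have hnul : Module.finrank (ZMod 2) (LinearMap.ker α.mulVecLin) <
          Module.finrank (ZMod 2) (LinearMap.ker α'.mulVecLin) :=
        Submodule.finrank_lt_finrank_of_lt hkerlt
      have hr1 := rank_nullity α
      have hr2 := rank_nullity α'
      have hge : k ≤ α'.rank + 1 := by
        have h1 := rank_add_le α' (vecMulVec u u)
        have h2 := rank_vmv_le u u
        rw [← hrecover] at h1
        omega
      have hrk' : α'.rank = k - 1 := by omega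
      obtain ⟨s', t', z', hk', hdec', hmem'⟩ := IH (k - 1) (by omega) α' hsymα' hrk'
      set znew : ℕ → Fin m → ZMod 2 := fun n => if n = 0 then u else z' (n - 1) with hznew
      have hz0 : znew 0 = u := by simp [hznew]
      have hzs : ∀ n, znew (n + 1) = z' n := by
        intro n; simp [hznew]
      refine ⟨s' + 1, t', znew, by omega, ?_, ?_⟩
      · -- decomposition
        rw [hrecover, hdec']
        rw [Finset.sum_range_succ']
        have e1 : ∀ a ∈ Finset.range s',
            vecMulVec (znew (a + 1)) (znew (a + 1)) = vecMulVec (z' a) (z' a) := by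
          intro a _; rw [hzs]
        have e2 : ∀ b ∈ Finset.range t',
            (vecMulVec (znew (s' + 1 + 2 * b + 1)) (znew (s' + 1 + 2 * b)) +
             vecMulVec (znew (s' + 1 + 2 * b)) (znew (s' + 1 + 2 * b + 1))) =
            (vecMulVec (z' (s' + 2 * b + 1)) (z' (s' + 2 * b)) +
             vecMulVec (z' (s' + 2 * b)) (z' (s' + 2 * b + 1))) := by
          intro b _
          have e3 : s' + 1 + 2 * b = (s' + 2 * b) + 1 := by omega
          rw [e3, hzs, hzs]
        rw [Finset.sum_congr rfl e1, Finset.sum_congr rfl e2, hz0]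
        abel
      · -- membership
        have hrange : LinearMap.range α'.mulVecLin ≤ LinearMap.range α.mulVecLin := by
          rintro _ ⟨x, rfl⟩
          refine ⟨x + (u ⬝ᵥ x) • (Pi.single i 1 : Fin m → ZMod 2), ?_⟩
          rw [Matrix.mulVecLin_apply, Matrix.mulVecLin_apply, hα'mulVec,
            Matrix.mulVec_add, Matrix.mulVec_smul, ← hu]
        intro n hn
        rcases Nat.eq_zero_or_pos n with hn0 | hnpos
        · subst hn0
          rw [hz0]
          exact ⟨Pi.single i 1, by rw [Matrix.mulVecLin_apply, ← hu]⟩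
        · obtain ⟨n', rfl⟩ : ∃ n', n = n' + 1 := ⟨n - 1, by omega⟩
          rw [hzs]
          exact hrange (hmem' n' (by omega))
    · -- Case B: zero diagonal
      push_neg at hd
      obtain ⟨i, j, hij0⟩ := hex
      have hij : α i j = 1 := hone _ hij0
      set u : Fin m → ZMod 2 := α *ᵥ Pi.single i 1 with hu
      set v : Fin m → ZMod 2 := α *ᵥ Pi.single j 1 with hv
      have hucol : ∀ r, u r = α r i := by
        intro r; rw [hu, Matrix.mulVec_single_one]; rfl
      have hvcol : ∀ r, v r = α r j := by
        intro r; rw [hv, Matrix.mulVec_single_one]; rfl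
      have hudot : ∀ x, u ⬝ᵥ x = (α *ᵥ x) i := by
        intro x
        simp only [dotProduct, mulVec, dotProduct]
        exact Finset.sum_congr rfl fun r _ => by rw [hucol r, hsym' r i]
      have hvdot : ∀ x, v ⬝ᵥ x = (α *ᵥ x) j := by
        intro x
        simp only [dotProduct, mulVec, dotProduct]
        exact Finset.sum_congr rfl fun r _ => by rw [hvcol r, hsym' r j]
      have hui : u i = 0 := by rw [hucol]; exact hd i
      have huj : u j = 1 := by rw [hucol, hsym' j i]; exact hij
      have hvi : v i = 1 := by rw [hvcol]; exact hij
      have hvj : v j = 0 := by rw [hvcol]; exact hd j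
      set α' := α + vecMulVec u v + vecMulVec v u with hα'
      have hsymα' : α'ᵀ = α' := by
        rw [hα', Matrix.transpose_add, Matrix.transpose_add, hsym, vmv_transpose,
          vmv_transpose]
        abel
      have hrecover : α = α' + vecMulVec u v + vecMulVec v u := by
        rw [hα']
        have h5 : α + vecMulVec u v + vecMulVec v u + vecMulVec u v + vecMulVec v u
            = α + (vecMulVec u v + vecMulVec u v) + (vecMulVec v u + vecMulVec v u) := by
          abel
        rw [h5, addself_mat, addself_mat, add_zero, add_zero]
      have hα'mulVec : ∀ x, α' *ᵥ x = α *ᵥ x + (v ⬝ᵥ x) • u + (u ⬝ᵥ x) • v := by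
        intro x
        rw [hα', Matrix.add_mulVec, Matrix.add_mulVec, vmv_mulVec, vmv_mulVec]
      have hune : u ≠ 0 := fun h => by
        have := congrFun h j; rw [huj] at this; exact one_ne_zero this
      have hvne : v ≠ 0 := fun h => by
        have := congrFun h i; rw [hvi] at this; exact one_ne_zero this
      have hei : α' *ᵥ Pi.single i 1 = 0 := by
        rw [hα'mulVec, ← hu]
        have h1 : v ⬝ᵥ Pi.single i (1 : ZMod 2) = v i := by simp [dotProduct_single]
        have h2 : u ⬝ᵥ Pi.single i (1 : ZMod 2) = u i := by simp [dotProduct_single]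
        rw [h1, h2, hvi, hui, one_smul, zero_smul, add_zero, addself_vec]
      have hej : α' *ᵥ Pi.single j 1 = 0 := by
        rw [hα'mulVec, ← hv]
        have h1 : v ⬝ᵥ Pi.single j (1 : ZMod 2) = v j := by simp [dotProduct_single]
        have h2 : u ⬝ᵥ Pi.single j (1 : ZMod 2) = u j := by simp [dotProduct_single]
        rw [h1, h2, hvj, huj, zero_smul, add_zero, one_smul, addself_vec]
      have hkerle : LinearMap.ker α.mulVecLin ≤ LinearMap.ker α'.mulVecLin := by
        intro x hx
        have hx0 : α *ᵥ x = 0 := LinearMap.mem_ker.mp hx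
        refine LinearMap.mem_ker.mpr ?_
        show α' *ᵥ x = 0
        rw [hα'mulVec, hx0, hudot, hvdot, hx0]
        simp
      set K1 := LinearMap.ker α.mulVecLin ⊔
        Submodule.span (ZMod 2) {(Pi.single i 1 : Fin m → ZMod 2)} with hK1
      have hK1le : K1 ≤ LinearMap.ker α'.mulVecLin := by
        apply sup_le hkerle
        rw [Submodule.span_singleton_le_iff_mem]
        exact LinearMap.mem_ker.mpr hei
      have hlt1 : LinearMap.ker α.mulVecLin < K1 := by
        refine lt_of_le_of_ne le_sup_left (fun heq => ?_)
        have : Pi.single i (1 : ZMod 2) ∈ LinearMap.ker α.mulVecLin := by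
          rw [heq]
          exact Submodule.mem_sup_right (Submodule.mem_span_singleton_self _)
        have h0 : α *ᵥ Pi.single i 1 = 0 := LinearMap.mem_ker.mp this
        rw [← hu] at h0
        exact hune h0
      have hlt2 : K1 < LinearMap.ker α'.mulVecLin := by
        refine lt_of_le_of_ne hK1le (fun heq => ?_)
        have hjmem : Pi.single j (1 : ZMod 2) ∈ K1 := by
          rw [heq]; exact LinearMap.mem_ker.mpr hej
        rw [hK1] at hjmem
        obtain ⟨y, hy, w, hw, hyw⟩ := Submodule.mem_sup.mp hjmem
        obtain ⟨c, rfl⟩ := Submodule.mem_span_singleton.mp hw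
        have hy0 : α *ᵥ y = 0 := LinearMap.mem_ker.mp hy
        have h6 : α *ᵥ Pi.single j 1 = α *ᵥ y + c • (α *ᵥ Pi.single i 1) := by
          rw [← hyw, Matrix.mulVec_add, Matrix.mulVec_smul]
        rw [hy0, zero_add, ← hu, ← hv] at h6
        have h7 := congrFun h6 i
        rw [hvi] at h7
        have hci : (c • u) i = c * u i := rfl
        rw [hci, hui, mul_zero] at h7
        exact one_ne_zero h7
      have hnul : Module.finrank (ZMod 2) (LinearMap.ker α.mulVecLin) + 2 ≤
          Module.finrank (ZMod 2) (LinearMap.ker α'.mulVecLin) := by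
        have h1 := Submodule.finrank_lt_finrank_of_lt hlt1
        have h2 := Submodule.finrank_lt_finrank_of_lt hlt2
        omega
      have hr1 := rank_nullity α
      have hr2 := rank_nullity α'
      have hge : k ≤ α'.rank + 2 := by
        have ha := rank_add_le (α' + vecMulVec u v) (vecMulVec v u)
        have hb := rank_add_le α' (vecMulVec u v)
        have hc := rank_vmv_le u v
        have hd2 := rank_vmv_le v u
        rw [← hrecover] at ha
        omega
      have hrk' : α'.rank = k - 2 := by omega
      obtain ⟨s', t', z', hk', hdec', hmem'⟩ := IH (k - 2) (by omega) α' hsymα' hrk'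
      set K := s' + 2 * t' with hK
      set zf : ℕ → Fin m → ZMod 2 :=
        fun n => if n < K then z' n else if n = K then u else v with hzf
      have hz1 : ∀ n, n < K → zf n = z' n := by
        intro n hn; simp [hzf, hn]
      have hz2 : zf K = u := by simp [hzf]
      have hz3 : zf (K + 1) = v := by
        have h1 : ¬ (K + 1 < K) := by omega
        have h2 : ¬ (K + 1 = K) := by omega
        simp [hzf, h1, h2]
      refine ⟨s', t' + 1, zf, by omega, ?_, ?_⟩
      · -- decomposition
        rw [hrecover, hdec']
        rw [Finset.sum_range_succ]
        have e1 : ∀ a ∈ Finset.range s', vecMulVec (zf a) (zf a) =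
            vecMulVec (z' a) (z' a) := by
          intro a ha
          rw [hz1 a (by have := Finset.mem_range.mp ha; omega)]
        have e2 : ∀ b ∈ Finset.range t',
            (vecMulVec (zf (s' + 2 * b + 1)) (zf (s' + 2 * b)) +
             vecMulVec (zf (s' + 2 * b)) (zf (s' + 2 * b + 1))) =
            (vecMulVec (z' (s' + 2 * b + 1)) (z' (s' + 2 * b)) +
             vecMulVec (z' (s' + 2 * b)) (z' (s' + 2 * b + 1))) := by
          intro b hb
          have hblt := Finset.mem_range.mp hb
          rw [hz1 _ (by omega), hz1 _ (by omega)]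
        have e4 : zf (s' + 2 * t') = u := hz2
        have e5 : zf (s' + 2 * t' + 1) = v := hz3
        rw [Finset.sum_congr rfl e1, Finset.sum_congr rfl e2, e4, e5]
        abel
      · -- membership
        have hrange : LinearMap.range α'.mulVecLin ≤ LinearMap.range α.mulVecLin := by
          rintro _ ⟨x, rfl⟩
          refine ⟨x + (v ⬝ᵥ x) • (Pi.single i 1 : Fin m → ZMod 2)
            + (u ⬝ᵥ x) • (Pi.single j 1 : Fin m → ZMod 2), ?_⟩
          rw [Matrix.mulVecLin_apply, Matrix.mulVecLin_apply, hα'mulVec,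
            Matrix.mulVec_add, Matrix.mulVec_add, Matrix.mulVec_smul,
            Matrix.mulVec_smul, ← hu, ← hv]
        intro n hn
        by_cases h1 : n < K
        · rw [hz1 n h1]
          exact hrange (hmem' n (by omega))
        · by_cases h2 : n = K
          · subst h2
            rw [hz2]
            exact ⟨Pi.single i 1, by rw [Matrix.mulVecLin_apply, ← hu]⟩
          · obtain rfl : n = K + 1 := by omega
            rw [hz3]
            exact ⟨Pi.single j 1, by rw [Matrix.mulVecLin_apply, ← hv]⟩

end SymDecompAux

theorem symmetric_rank_decomposition {m k : ℕ}
    (α : Matrix (Fin m) (Fin m) (ZMod 2))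
    (hsym : α.transpose = α) (hrank : α.rank = k) :
    ∃ (s t : ℕ) (z : ℕ → (Fin m → ZMod 2)),
      k = s + 2 * t ∧
      LinearIndependent (ZMod 2) (fun i : Fin k => z i) ∧
      α = (∑ a ∈ Finset.range s, Matrix.vecMulVec (z a) (z a)) +
          ∑ b ∈ Finset.range t,
            (Matrix.vecMulVec (z (s + 2 * b + 1)) (z (s + 2 * b)) +
             Matrix.vecMulVec (z (s + 2 * b)) (z (s + 2 * b + 1))) := by
  obtain ⟨s, t, z, hkst, hdec, hmem⟩ := SymDecompAux.aux k α hsym hrank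
  refine ⟨s, t, z, hkst, ?_, hdec⟩
  have hspan : Submodule.span (ZMod 2) (Set.range (fun i : Fin k => z i)) =
      LinearMap.range α.mulVecLin := by
    apply le_antisymm
    · rw [Submodule.span_le]
      rintro _ ⟨i, rfl⟩
      exact hmem i.val i.isLt
    · rintro _ ⟨x, rfl⟩
      rw [Matrix.mulVecLin_apply]
      have hmemz : ∀ n, n < k → z n ∈ Submodule.span (ZMod 2)
          (Set.range (fun i : Fin k => z i)) := by
        intro n hn
        exact Submodule.subset_span ⟨⟨n, hn⟩, rfl⟩
      rw [hdec]
      rw [Matrix.add_mulVec, SymDecompAux.sum_mulVec, SymDecompAux.sum_mulVec]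
      apply Submodule.add_mem
      · apply Submodule.sum_mem
        intro a ha
        rw [SymDecompAux.vmv_mulVec]
        exact Submodule.smul_mem _ _ (hmemz a (by have := Finset.mem_range.mp ha; omega))
      · apply Submodule.sum_mem
        intro b hb
        have hblt := Finset.mem_range.mp hb
        rw [Matrix.add_mulVec, SymDecompAux.vmv_mulVec, SymDecompAux.vmv_mulVec]
        exact Submodule.add_mem _
          (Submodule.smul_mem _ _ (hmemz (s + 2 * b + 1) (by omega)))
          (Submodule.smul_mem _ _ (hmemz (s + 2 * b) (by omega)))
  rw [linearIndependent_iff_card_eq_finrank_span]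
  rw [Fintype.card_fin]
  rw [Set.finrank, hspan]
  rw [← hrank, Matrix.rank]
end

section
/- Conversely: if z₁,…,z_k ∈ GF(2)^m are linearly independent and α = Σ_{i=1}^{s} z_i⊗z_i + Σ_{j=1}^{t} (z_{s+2j}⊗z_{s+2j-1} + z_{s+2j-1}⊗z_{s+2j}) with k = s + 2t, then rank(α) = k. -/
open Matrix

lemma vecMulVec_mulVec' {m : ℕ} (u v x : Fin m → ZMod 2) :
    (Matrix.vecMulVec u v).mulVec x = (v ⬝ᵥ x) • u := by
  funext i
  simp [Matrix.mulVec, Matrix.vecMulVec, dotProduct, Finset.mul_sum, mul_comm, mul_left_comm]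

lemma sum_mulVec' {m : ℕ} {ι : Type*} (s : Finset ι) (M : ι → Matrix (Fin m) (Fin m) (ZMod 2))
    (x : Fin m → ZMod 2) :
    (∑ a ∈ s, M a).mulVec x = ∑ a ∈ s, (M a).mulVec x := by
  classical
  induction s using Finset.induction_on with
  | empty => simp
  | insert _ _ h ih => rw [Finset.sum_insert h, Finset.sum_insert h, Matrix.add_mulVec, ih]

lemma dual_family {m k : ℕ} (z : ℕ → (Fin m → ZMod 2))
    (hz : LinearIndependent (ZMod 2) (fun i : Fin k => z i)) :
    ∀ j : Fin k, ∃ x : Fin m → ZMod 2, ∀ i : Fin k,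
      z i ⬝ᵥ x = if i = j then 1 else 0 := by
  intro j
  set W := Submodule.span (ZMod 2) (Set.range (fun i : Fin k => z i))
  obtain ⟨g, hg⟩ := LinearMap.exists_extend ((Module.Basis.span hz).coord j)
  refine ⟨fun i0 => g (Pi.single i0 1), fun i => ?_⟩
  have hdot : ∀ v : Fin m → ZMod 2, v ⬝ᵥ (fun i0 => g (Pi.single i0 1)) = g v := by
    intro v
    have : v = ∑ i0, Pi.single i0 (v i0) := by
      rw [Finset.univ_sum_single]
    conv_rhs => rw [this]
    rw [map_sum, dotProduct]
    congr 1; funext i0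
    have : Pi.single i0 (v i0) = ((v i0 • Pi.single i0 1 : Fin m → ZMod 2)) := by
      rw [← Pi.single_smul]; simp
    rw [this, g.map_smul, smul_eq_mul]
  rw [hdot]
  have hmem : z i ∈ W := Submodule.subset_span ⟨i, rfl⟩
  have : g (z i) = (Module.Basis.span hz).coord j ⟨z i, hmem⟩ := by
    have := LinearMap.congr_fun hg ⟨z i, hmem⟩
    simpa using this
  rw [this]
  have hb : (⟨z i, hmem⟩ : W) = Module.Basis.span hz i := by
    ext; simp [Module.Basis.span_apply]
  rw [hb]
  rw [Module.Basis.coord_apply, Module.Basis.repr_self]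
  simp [Finsupp.single_apply, eq_comm]

theorem rank_of_symmetric_decomposition {m k : ℕ}
    (s t : ℕ) (hk : k = s + 2 * t) (z : ℕ → (Fin m → ZMod 2))
    (hz : LinearIndependent (ZMod 2) (fun i : Fin k => z i))
    (α : Matrix (Fin m) (Fin m) (ZMod 2))
    (hα : α = (∑ a ∈ Finset.range s, Matrix.vecMulVec (z a) (z a)) +
          ∑ b ∈ Finset.range t,
            (Matrix.vecMulVec (z (s + 2 * b + 1)) (z (s + 2 * b)) +
             Matrix.vecMulVec (z (s + 2 * b)) (z (s + 2 * b + 1)))) :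
    α.rank = k := by
  classical
  set W := Submodule.span (ZMod 2) (Set.range (fun i : Fin k => z i)) with hW
  have hzmem : ∀ n, n < k → z n ∈ W := fun n hn => Submodule.subset_span ⟨⟨n, hn⟩, rfl⟩
  -- evaluation of α on dual vectors
  have eval : ∀ j : Fin k, ∃ x : Fin m → ZMod 2, α.mulVec x =
      if (j : ℕ) < s then z j
      else if ((j : ℕ) - s) % 2 = 0 then z ((j : ℕ) + 1) else z ((j : ℕ) - 1) := by
    intro j
    obtain ⟨x, hx⟩ := dual_family z hz j
    refine ⟨x, ?_⟩
    have hd : ∀ n, n < k → z n ⬝ᵥ x = if n = (j : ℕ) then 1 else 0 := by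
      intro n hn
      have := hx ⟨n, hn⟩
      simpa [Fin.ext_iff] using this
    rw [hα, Matrix.add_mulVec, sum_mulVec', sum_mulVec']
    have h1 : ∑ a ∈ Finset.range s, (Matrix.vecMulVec (z a) (z a)).mulVec x =
        if (j : ℕ) < s then z j else 0 := by
      have hc : ∀ a ∈ Finset.range s, (Matrix.vecMulVec (z a) (z a)).mulVec x =
          if a = (j : ℕ) then z a else 0 := by
        intro a ha
        rw [vecMulVec_mulVec', hd a (by simp only [Finset.mem_range] at ha; omega)]
        split <;> simp
      rw [Finset.sum_congr rfl hc, Finset.sum_ite_eq' (Finset.range s) ((j : ℕ))]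
      by_cases h : (j : ℕ) < s <;> simp [h]
    have h2 : ∑ b ∈ Finset.range t,
        ((Matrix.vecMulVec (z (s + 2 * b + 1)) (z (s + 2 * b)) +
          Matrix.vecMulVec (z (s + 2 * b)) (z (s + 2 * b + 1)))).mulVec x =
        if (j : ℕ) < s then 0
        else if ((j : ℕ) - s) % 2 = 0 then z ((j : ℕ) + 1) else z ((j : ℕ) - 1) := by
      have hc : ∀ b ∈ Finset.range t,
          ((Matrix.vecMulVec (z (s + 2 * b + 1)) (z (s + 2 * b)) +
            Matrix.vecMulVec (z (s + 2 * b)) (z (s + 2 * b + 1)))).mulVec x =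
          (if s + 2 * b = (j : ℕ) then z (s + 2 * b + 1) else 0) +
          (if s + 2 * b + 1 = (j : ℕ) then z (s + 2 * b) else 0) := by
        intro b hb
        simp only [Finset.mem_range] at hb
        have hjk : (j : ℕ) < k := j.2
        rw [Matrix.add_mulVec, vecMulVec_mulVec', vecMulVec_mulVec',
          hd (s + 2 * b) (by omega), hd (s + 2 * b + 1) (by omega)]
        congr 1 <;> (split <;> simp)
      rw [Finset.sum_congr rfl hc]
      have hjk : (j : ℕ) < k := j.2
      by_cases hjs : (j : ℕ) < s
      · rw [Finset.sum_eq_zero]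
        · simp [hjs]
        · intro b hb
          rw [if_neg (by omega), if_neg (by omega)]
          simp
      · simp only [if_neg hjs]
        by_cases hpar : ((j : ℕ) - s) % 2 = 0
        · simp only [if_pos hpar]
          rw [Finset.sum_eq_single (((j : ℕ) - s) / 2)]
          · rw [if_pos (by omega), if_neg (by omega), add_zero]
            have he : s + 2 * (((j : ℕ) - s) / 2) + 1 = (j : ℕ) + 1 := by omega
            rw [he]
          · intro b hb hne
            simp only [Finset.mem_range] at hb
            rw [if_neg (by omega), if_neg (by omega)]
            simp
          · intro hmem
            exfalso
            apply hmem
            simp only [Finset.mem_range]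
            omega
        · simp only [if_neg hpar]
          rw [Finset.sum_eq_single (((j : ℕ) - s) / 2)]
          · rw [if_neg (by omega), if_pos (by omega), zero_add]
            have he : s + 2 * (((j : ℕ) - s) / 2) = (j : ℕ) - 1 := by omega
            rw [he]
          · intro b hb hne
            simp only [Finset.mem_range] at hb
            rw [if_neg (by omega), if_neg (by omega)]
            simp
          · intro hmem
            exfalso
            apply hmem
            simp only [Finset.mem_range]
            omega
    rw [h1, h2]
    by_cases h : (j : ℕ) < s <;> simp [h]
  -- range = W
  have key : LinearMap.range α.mulVecLin = W := by
    apply le_antisymm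
    · rintro y ⟨x, rfl⟩
      rw [Matrix.mulVecLin_apply, hα, Matrix.add_mulVec, sum_mulVec', sum_mulVec']
      refine W.add_mem (Submodule.sum_mem _ fun a ha => ?_) (Submodule.sum_mem _ fun b hb => ?_)
      · simp only [Finset.mem_range] at ha
        rw [vecMulVec_mulVec']
        exact W.smul_mem _ (hzmem a (by omega))
      · simp only [Finset.mem_range] at hb
        rw [Matrix.add_mulVec, vecMulVec_mulVec', vecMulVec_mulVec']
        exact W.add_mem (W.smul_mem _ (hzmem _ (by omega))) (W.smul_mem _ (hzmem _ (by omega)))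
    · rw [hW, Submodule.span_le]
      rintro _ ⟨i, rfl⟩
      have hik : (i : ℕ) < k := i.2
      by_cases his : (i : ℕ) < s
      · obtain ⟨x, hx⟩ := eval i
        exact ⟨x, by rw [Matrix.mulVecLin_apply, hx, if_pos his]⟩
      · by_cases hpar : ((i : ℕ) - s) % 2 = 0
        · -- use dual at i+1
          have hlt : (i : ℕ) + 1 < k := by omega
          obtain ⟨x, hx⟩ := eval ⟨(i : ℕ) + 1, hlt⟩
          refine ⟨x, ?_⟩
          rw [Matrix.mulVecLin_apply, hx]
          rw [if_neg (by simp; omega), if_neg (by simp; omega)]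
          show z ((i : ℕ) + 1 - 1) = z i
          have he : (i : ℕ) + 1 - 1 = (i : ℕ) := by omega
          rw [he]
        · have hge : s + 1 ≤ (i : ℕ) := by omega
          obtain ⟨x, hx⟩ := eval ⟨(i : ℕ) - 1, by omega⟩
          refine ⟨x, ?_⟩
          rw [Matrix.mulVecLin_apply, hx]
          rw [if_neg (by simp; omega), if_pos (by simp; omega)]
          show z ((i : ℕ) - 1 + 1) = z i
          have he : (i : ℕ) - 1 + 1 = (i : ℕ) := by omega
          rw [he]
  rw [Matrix.rank, key, hW, finrank_span_eq_card hz, Fintype.card_fin]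
end
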